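/- arXiv:2603.11919 — 3 statements merged into one kernel-verified Lean document; each statement's English description precedes it below -/
import Mathlib

section
/- Let Q ∈ ℝ^{n_c × n_z} have full row rank. If Q^T w₁ = -∇φ(z₁) and Q^T w₂ = -∇φ(z₂) where φ is L_φ-smooth, then ‖w₁ - w₂‖² ≤ (L_φ²/λ_min⁺(Q^T Q))·‖z₁ - z₂‖², where λ_min⁺ denotes the smallest positive eigenvalue. -/
open Matrix

/-- Identification of a plain vector with a point of Euclidean space. -/
noncomputable def toE {n : ℕ} (v : Fin n → ℝ) : EuclideanSpace ℝ (Fin n) :=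
  (WithLp.equiv 2 (Fin n → ℝ)).symm v

/-- View a Euclidean vector as a plain vector. -/
noncomputable def ofE {n : ℕ} (v : EuclideanSpace ℝ (Fin n)) : Fin n → ℝ :=
  WithLp.equiv 2 (Fin n → ℝ) v

private lemma inner_eq_dot {m : ℕ} (x y : EuclideanSpace ℝ (Fin m)) :
    (inner ℝ x y : ℝ) = ofE x ⬝ᵥ ofE y := by
  simp [ofE, PiLp.inner_apply, dotProduct, mul_comm]

private lemma dot_ofE {m : ℕ} (x : EuclideanSpace ℝ (Fin m)) :
    ofE x ⬝ᵥ ofE x = ‖x‖ ^ 2 := by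
  rw [← inner_eq_dot, real_inner_self_eq_norm_sq]

private lemma eig_mem {m : ℕ} {B : Matrix (Fin m) (Fin m) ℝ} (hB : B.IsHermitian)
    {μ : ℝ} {u : Fin m → ℝ} (hu : u ≠ 0) (huB : B *ᵥ u = μ • u) :
    ∃ i, hB.eigenvalues i = μ := by
  by_contra hcon
  push_neg at hcon
  have hBt : Bᵀ = B := by
    rw [← conjTranspose_eq_transpose_of_trivial]; exact hB
  have h0 : ∀ i, ⇑(hB.eigenvectorBasis i) ⬝ᵥ u = 0 := by
    intro i
    have h1 : ⇑(hB.eigenvectorBasis i) ⬝ᵥ (B *ᵥ u)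
        = μ * (⇑(hB.eigenvectorBasis i) ⬝ᵥ u) := by
      rw [huB, dotProduct_smul, smul_eq_mul]
    have h2 : ⇑(hB.eigenvectorBasis i) ⬝ᵥ (B *ᵥ u)
        = hB.eigenvalues i * (⇑(hB.eigenvectorBasis i) ⬝ᵥ u) := by
      rw [dotProduct_mulVec, ← mulVec_transpose, hBt, hB.mulVec_eigenvectorBasis,
        smul_dotProduct, smul_eq_mul]
    have h3 : (hB.eigenvalues i - μ) * (⇑(hB.eigenvectorBasis i) ⬝ᵥ u) = 0 := by
      rw [sub_mul, h2.symm.trans h1]; ring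
    rcases mul_eq_zero.mp h3 with h | h
    · exact absurd (by linarith : hB.eigenvalues i = μ) (hcon i)
    · exact h
  apply hu
  have hrepr : hB.eigenvectorBasis.repr (toE u) = 0 := by
    ext i
    rw [hB.eigenvectorBasis.repr_apply_apply, inner_eq_dot]
    simpa [ofE, toE] using h0 i
  have : toE u = 0 := by
    have := congrArg hB.eigenvectorBasis.repr.symm hrepr
    simpa using this
  simpa [toE] using congrArg (WithLp.equiv 2 (Fin m → ℝ)) this

private lemma rayleigh_lb {m : ℕ} {A : Matrix (Fin m) (Fin m) ℝ} (hA : A.IsHermitian)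
    {c : ℝ} (hc : ∀ j, c ≤ hA.eigenvalues j) (v : Fin m → ℝ) :
    c * (v ⬝ᵥ v) ≤ v ⬝ᵥ (A *ᵥ v) := by
  set U : Matrix (Fin m) (Fin m) ℝ := (hA.eigenvectorUnitary : Matrix (Fin m) (Fin m) ℝ) with hU
  have hUt : star U = Uᵀ := by
    rw [star_eq_conjTranspose, conjTranspose_eq_transpose_of_trivial]
  have hUU : U * Uᵀ = 1 := by
    rw [← hUt]; exact (mem_unitaryGroup_iff).mp hA.eigenvectorUnitary.2
  set y := v ᵥ* U with hy
  have hyy : y ⬝ᵥ y = v ⬝ᵥ v := by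
    have h := dotProduct_mulVec v U (Uᵀ *ᵥ v)
    rw [mulVec_mulVec, hUU, one_mulVec] at h
    rw [h, hy]
    congr 1
    rw [mulVec_transpose]
  have hD : diagonal (RCLike.ofReal ∘ hA.eigenvalues) = diagonal hA.eigenvalues := by
    congr 1
  have h1 : v ⬝ᵥ (A *ᵥ v) = ∑ j, hA.eigenvalues j * (y j * y j) := by
    conv_lhs => rw [hA.spectral_theorem]
    rw [Unitary.conjStarAlgAut_apply, mul_assoc, ← mulVec_mulVec, dotProduct_mulVec, ← hy, ← mulVec_mulVec,
      hUt, mulVec_transpose, ← hy, hD]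
    simp [dotProduct, mulVec_diagonal]
    exact Finset.sum_congr rfl fun j _ => by ring
  rw [h1, ← hyy, dotProduct, Finset.mul_sum]
  exact Finset.sum_le_sum fun j _ => mul_le_mul_of_nonneg_right (hc j) (mul_self_nonneg _)

/-- If `Q` has full row rank, `φ` is `L_φ`-smooth, and
`Qᵀ wᵢ = -∇φ(zᵢ)` for `i = 1, 2`, then
`‖w₁ - w₂‖² ≤ (L_φ² / λ_min⁺(QᵀQ)) ‖z₁ - z₂‖²`, where `λ_min⁺(QᵀQ)` is the
smallest positive eigenvalue of `QᵀQ`. -/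
theorem stmt_2 (nc nz : ℕ) (Q : Matrix (Fin nc) (Fin nz) ℝ)
    (hrank : Q.rank = nc)
    (φ : EuclideanSpace ℝ (Fin nz) → ℝ) (hdiff : Differentiable ℝ φ)
    (Lφ : ℝ) (hLφ : 0 ≤ Lφ)
    (hlip : LipschitzWith (Real.toNNReal Lφ) (fun z => gradient φ z))
    (w₁ w₂ : EuclideanSpace ℝ (Fin nc)) (z₁ z₂ : EuclideanSpace ℝ (Fin nz))
    (h₁ : Qᵀ.mulVec (ofE w₁) = ofE (-gradient φ z₁))
    (h₂ : Qᵀ.mulVec (ofE w₂) = ofE (-gradient φ z₂))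
    (hH : (Qᵀ * Q).IsHermitian)
    (lamPlus : ℝ)
    (hlam : lamPlus = sInf {t : ℝ | 0 < t ∧ ∃ i, hH.eigenvalues i = t}) :
    ‖w₁ - w₂‖ ^ 2 ≤ Lφ ^ 2 / lamPlus * ‖z₁ - z₂‖ ^ 2 := by
  classical
  have hQT : Qᴴ = Qᵀ := conjTranspose_eq_transpose_of_trivial Q
  have hA : (Q * Qᵀ).IsHermitian := by
    rw [← hQT]; exact isHermitian_mul_conjTranspose_self Q
  have hgrad : ‖gradient φ z₁ - gradient φ z₂‖ ≤ Lφ * ‖z₁ - z₂‖ := by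
    have h := hlip.dist_le_mul z₁ z₂
    simpa [dist_eq_norm, Real.coe_toNNReal _ hLφ] using h
  have hofE : ofE (w₁ - w₂) = ofE w₁ - ofE w₂ := rfl
  have hQw : Qᵀ *ᵥ ofE (w₁ - w₂) = ofE (gradient φ z₂ - gradient φ z₁) := by
    rw [hofE, mulVec_sub, h₁, h₂]
    have : gradient φ z₂ - gradient φ z₁ = (-gradient φ z₁) - (-gradient φ z₂) := by abel
    rw [this]; rfl
  -- positivity of eigenvalues of Q * Qᵀ
  have hpsd : (Q * Qᵀ).PosSemidef := by
    rw [← hQT]; exact posSemidef_self_mul_conjTranspose Q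
  have hnonneg : ∀ j, 0 ≤ hA.eigenvalues j := fun j => hpsd.eigenvalues_nonneg j
  have hrankA : (Q * Qᵀ).rank = nc := by rw [rank_self_mul_transpose, hrank]
  have hne0 : ∀ j, hA.eigenvalues j ≠ 0 := by
    intro j hj
    have hcard := hA.rank_eq_card_non_zero_eigs
    rw [hrankA] at hcard
    have hlt := Fintype.card_subtype_lt (p := fun i => hA.eigenvalues i ≠ 0) (x := j)
      (by simpa using hj)
    rw [← hcard, Fintype.card_fin] at hlt
    exact lt_irrefl _ hlt
  have hpos : ∀ j, 0 < hA.eigenvalues j := fun j => (hnonneg j).lt_of_ne (Ne.symm (hne0 j))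
  -- each eigenvalue of Q * Qᵀ is a positive eigenvalue of Qᵀ * Q
  have hmem : ∀ j, hA.eigenvalues j ∈ {t : ℝ | 0 < t ∧ ∃ i, hH.eigenvalues i = t} := by
    intro j
    refine ⟨hpos j, ?_⟩
    set v : Fin nc → ℝ := ⇑(hA.eigenvectorBasis j) with hv
    have hvnz : v ≠ 0 := by
      intro h
      exact hA.eigenvectorBasis.orthonormal.ne_zero j (by ext i; exact congrFun h i)
    have hveq : (Q * Qᵀ) *ᵥ v = hA.eigenvalues j • v := hA.mulVec_eigenvectorBasis j
    set u : Fin nz → ℝ := Qᵀ *ᵥ v with hu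
    have huB : (Qᵀ * Q) *ᵥ u = hA.eigenvalues j • u := by
      have h1 : (Qᵀ * Q) *ᵥ u = Qᵀ *ᵥ ((Q * Qᵀ) *ᵥ v) := by
        rw [hu, mulVec_mulVec, mulVec_mulVec, Matrix.mul_assoc]
      rw [h1, hveq, mulVec_smul]
    have hunz : u ≠ 0 := by
      intro h
      have h2 : (Q * Qᵀ) *ᵥ v = 0 := by
        rw [← mulVec_mulVec, ← hu, h, mulVec_zero]
      rw [hveq] at h2
      exact hvnz ((smul_eq_zero.mp h2).resolve_left (hne0 j))
    exact eig_mem hH hunz huB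
  have hnnlam : 0 ≤ lamPlus := by
    rw [hlam]
    exact Real.sInf_nonneg (fun x hx => hx.1.le)
  rcases Nat.eq_zero_or_pos nc with h0 | h0
  · subst h0
    have hw : w₁ - w₂ = 0 := by ext i; exact i.elim0
    rw [hw, norm_zero]
    have : (0:ℝ) ≤ Lφ ^ 2 / lamPlus * ‖z₁ - z₂‖ ^ 2 :=
      mul_nonneg (div_nonneg (sq_nonneg _) hnnlam) (sq_nonneg _)
    simpa using this
  · have j₀ : Fin nc := ⟨0, h0⟩
    have hfin : {t : ℝ | 0 < t ∧ ∃ i, hH.eigenvalues i = t}.Finite := by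
      apply (Set.finite_range hH.eigenvalues).subset
      rintro t ⟨-, i, hi⟩
      exact ⟨i, hi⟩
    have hbdd : BddBelow {t : ℝ | 0 < t ∧ ∃ i, hH.eigenvalues i = t} :=
      ⟨0, fun x hx => hx.1.le⟩
    have hlampos : 0 < lamPlus := by
      rw [hlam]
      exact (Set.Nonempty.csInf_mem ⟨_, hmem j₀⟩ hfin).1
    have hc : ∀ j, lamPlus ≤ hA.eigenvalues j := by
      intro j; rw [hlam]; exact csInf_le hbdd (hmem j)
    have hray := rayleigh_lb hA hc (ofE (w₁ - w₂))
    have hdot : ofE (w₁ - w₂) ⬝ᵥ ((Q * Qᵀ) *ᵥ ofE (w₁ - w₂))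
        = ‖gradient φ z₂ - gradient φ z₁‖ ^ 2 := by
      rw [← mulVec_mulVec, dotProduct_mulVec, ← mulVec_transpose, hQw, dot_ofE]
    rw [hdot, dot_ofE] at hray
    have hg2 : ‖gradient φ z₂ - gradient φ z₁‖ ^ 2 ≤ Lφ ^ 2 * ‖z₁ - z₂‖ ^ 2 := by
      rw [norm_sub_rev]
      nlinarith [norm_nonneg (gradient φ z₁ - gradient φ z₂), norm_nonneg (z₁ - z₂)]
    rw [div_mul_eq_mul_div, le_div_iff₀ hlampos]
    nlinarith
end

section
/- Let h : ℝ^n → ℝ be μ-strongly convex and L-smooth, A a linear map, C a closed convex set, and b₁, b₂ ∈ Im(A). Define U₁ = {x : Ax + b₁ ∈ C} and U₂ = {x : Ax + b₂ ∈ C}, both nonempty, and let x* = argmin{h(x) : x ∈ U₁}, y* = argmin{h(y) : y ∈ U₂}. Then ‖x* - y*‖ ≤ ((1 + 2L/μ)/√(λ_min⁺(AA^T)))·‖b₂ - b₁‖. -/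
open Matrix

set_option linter.unusedSectionVars false

section Helpers
open Set


section ConvexAnalysis
variable {E : Type*} [NormedAddCommGroup E] [NormedSpace ℝ E]

lemma line_hasDerivAt (f : E → ℝ) (hd : Differentiable ℝ f) (x y : E) :
    HasDerivAt (fun t : ℝ => f (x + t • (y - x))) (fderiv ℝ f x (y - x)) 0 := by
  have h1 : HasDerivAt (fun t : ℝ => x + t • (y - x)) (y - x) 0 := by
    simpa using ((hasDerivAt_id (0:ℝ)).smul_const (y - x)).const_add x
  have h2 := ((hd (x + (0:ℝ) • (y - x))).hasFDerivAt).comp_hasDerivAt 0 h1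
  simpa [Function.comp_def] using h2

lemma line_convexOn {f : E → ℝ} (hf : ConvexOn ℝ Set.univ f) (x y : E) :
    ConvexOn ℝ Set.univ (fun t : ℝ => f (x + t • (y - x))) := by
  have h := hf.comp_affineMap (AffineMap.lineMap x y : ℝ →ᵃ[ℝ] E)
  rw [Set.preimage_univ] at h
  refine h.congr fun t _ => ?_
  simp only [Function.comp, AffineMap.lineMap_apply_module']
  rw [add_comm]

lemma convex_first_order {f : E → ℝ} (hf : ConvexOn ℝ Set.univ f)
    (hd : Differentiable ℝ f) (x y : E) :
    f x + fderiv ℝ f x (y - x) ≤ f y := by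
  have hder : HasDerivAt (fun t : ℝ => f (x + t • (y - x))) (fderiv ℝ f x (y - x)) 0 :=
    line_hasDerivAt f hd x y
  have h2 := (line_convexOn hf x y).le_slope_of_hasDerivAt (Set.mem_univ 0) (Set.mem_univ 1)
    zero_lt_one hder
  rw [slope_def_field] at h2
  rw [map_sub]
  simp at h2
  linarith

lemma variational_ineq {f : E → ℝ} (hd : Differentiable ℝ f) {U : Set E} (hU : Convex ℝ U)
    {x : E} (hxU : x ∈ U) (hmin : ∀ z ∈ U, f x ≤ f z) {y : E} (hyU : y ∈ U) :
    0 ≤ fderiv ℝ f x (y - x) := by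
  set φ : ℝ → ℝ := fun t => f (x + t • (y - x)) with hφ
  have hder : HasDerivAt φ (fderiv ℝ f x (y - x)) 0 := line_hasDerivAt f hd x y
  have htend : Filter.Tendsto (slope φ 0) (nhdsWithin 0 (Set.Ioi 0)) (nhds (fderiv ℝ f x (y - x))) :=
    (hasDerivAt_iff_tendsto_slope.1 hder).mono_left
      (nhdsWithin_mono _ (fun t ht => by simpa using ne_of_gt ht))
  refine ge_of_tendsto htend ?_
  filter_upwards [Ioo_mem_nhdsGT_of_mem (Set.mem_Ico.2 ⟨le_refl 0, zero_lt_one⟩)] with t ht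
  have hmem : x + t • (y - x) ∈ U := hU.add_smul_sub_mem hxU hyU ⟨le_of_lt ht.1, le_of_lt ht.2⟩
  have h1 : f x ≤ φ t := hmin _ hmem
  have h0 : φ 0 = f x := by simp [hφ]
  rw [slope_def_field]
  exact div_nonneg (by rw [h0]; linarith) (by simpa using ht.1.le)

end ConvexAnalysis


lemma A_eq_zero {m n : ℕ} (A : Matrix (Fin m) (Fin n) ℝ) (hH : (A * Aᵀ).IsHermitian)
    (heig : ∀ i, hH.eigenvalues i = 0) : A = 0 := by
  classical
  set V := hH.eigenvectorBasis with hV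
  have heigvec : ∀ i, (A * Aᵀ).mulVec (ofE (V i)) = 0 := by
    intro i
    have h1 : (A * Aᵀ).mulVec (ofE (V i)) = hH.eigenvalues i • ofE (V i) :=
      hH.mulVec_eigenvectorBasis i
    rw [h1, heig i, zero_smul]
  have hAtV : ∀ i, Aᵀ.mulVec (ofE (V i)) = 0 := by
    intro i
    rw [← dotProduct_self_eq_zero]
    rw [Matrix.dotProduct_mulVec, Matrix.vecMul_transpose, Matrix.mulVec_mulVec, heigvec i]
    simp
  have hAt : ∀ v : Fin m → ℝ, Aᵀ.mulVec v = 0 := by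
    intro v
    have hv : v = ∑ i, (V.repr (toE v) i) • ofE (V i) := by
      have h2 := V.sum_repr (toE v)
      calc v = ofE (toE v) := rfl
        _ = ofE (∑ i, (V.repr (toE v) i) • V i) := by rw [h2]
        _ = _ := by simp [ofE]
    rw [hv,
      show Aᵀ.mulVec (∑ i, (V.repr (toE v) i) • ofE (V i))
          = ∑ i, Aᵀ.mulVec ((V.repr (toE v) i) • ofE (V i)) from map_sum Aᵀ.mulVecLin _ _]
    simp only [Matrix.mulVec_smul, hAtV, smul_zero]
    simp
  have hT : Aᵀ = 0 := by
    ext i j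
    have h3 := congrFun (hAt (Pi.single j 1)) i
    simpa using h3
  simpa using congrArg Matrix.transpose hT

lemma U_convex {m n : ℕ} (A : Matrix (Fin m) (Fin n) ℝ) {C : Set (EuclideanSpace ℝ (Fin m))}
    (hCconv : Convex ℝ C) (b : EuclideanSpace ℝ (Fin m)) :
    Convex ℝ {x : EuclideanSpace ℝ (Fin n) | toE (A.mulVec (ofE x)) + b ∈ C} := by
  intro x hx y hy a s ha hs hab
  simp only [Set.mem_setOf_eq] at *
  have hkey : toE (A.mulVec (ofE (a • x + s • y))) + b
      = a • (toE (A.mulVec (ofE x)) + b) + s • (toE (A.mulVec (ofE y)) + b) := by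
    have h1 : A.mulVec (ofE (a • x + s • y))
        = a • A.mulVec (ofE x) + s • A.mulVec (ofE y) := by
      rw [show ofE (a • x + s • y) = a • ofE x + s • ofE y from rfl, Matrix.mulVec_add,
        Matrix.mulVec_smul, Matrix.mulVec_smul]
    rw [h1]
    have hb' : a • b + s • b = b := by rw [← add_smul, hab, one_smul]
    rw [show toE (a • A.mulVec (ofE x) + s • A.mulVec (ofE y))
        = a • toE (A.mulVec (ofE x)) + s • toE (A.mulVec (ofE y)) from rfl]
    conv_rhs => rw [smul_add, smul_add, add_add_add_comm, hb']
  rw [hkey]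
  exact hCconv hx hy ha hs hab


lemma innerE {n : ℕ} (a b : EuclideanSpace ℝ (Fin n)) : (inner ℝ a b : ℝ) = ofE a ⬝ᵥ ofE b := by
  rw [EuclideanSpace.inner_eq_star_dotProduct]; simp [ofE, dotProduct_comm]

lemma normE_sq {n : ℕ} (a : EuclideanSpace ℝ (Fin n)) : ‖a‖^2 = ofE a ⬝ᵥ ofE a := by
  rw [← real_inner_self_eq_norm_sq, innerE]

lemma spectral_solve {m n : ℕ} (A : Matrix (Fin m) (Fin n) ℝ) (hH : (A * Aᵀ).IsHermitian)
    (lamPlus : ℝ)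
    (hlam : lamPlus = sInf {t : ℝ | 0 < t ∧ ∃ i, hH.eigenvalues i = t})
    (w : EuclideanSpace ℝ (Fin m)) (z : Fin n → ℝ) (hw : A.mulVec z = ofE w) :
    ∃ d : Fin n → ℝ, A.mulVec d = ofE w ∧ lamPlus * ‖toE d‖ ^ 2 ≤ ‖w‖ ^ 2 := by
  classical
  set M := A * Aᵀ with hM
  set eig := hH.eigenvalues with heigdef
  set V := hH.eigenvectorBasis with hVdef
  have heigvec : ∀ i, M.mulVec (ofE (V i)) = eig i • ofE (V i) := fun i =>
    hH.mulVec_eigenvectorBasis i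
  have hPSD : M.PosSemidef := by
    have := Matrix.posSemidef_self_mul_conjTranspose A
    rwa [conjTranspose_eq_transpose_of_trivial] at this
  have heig0 : ∀ i, 0 ≤ eig i := fun i => hPSD.eigenvalues_nonneg i
  set c : Fin m → ℝ := fun i => (inner ℝ (V i) w : ℝ) with hc
  have hAtV : ∀ i, eig i = 0 → Aᵀ.mulVec (ofE (V i)) = 0 := by
    intro i h0
    rw [← dotProduct_self_eq_zero (v := Aᵀ.mulVec (ofE (V i)))]
    rw [Matrix.dotProduct_mulVec, Matrix.vecMul_transpose, Matrix.mulVec_mulVec, ← hM,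
      heigvec i, h0]
    simp
  have hczero : ∀ i, eig i = 0 → c i = 0 := by
    intro i h0
    rw [hc]
    simp only
    rw [innerE, ← hw, Matrix.dotProduct_mulVec, ← Matrix.mulVec_transpose, hAtV i h0]
    simp
  set coef : Fin m → ℝ := fun i => if eig i = 0 then 0 else c i / eig i with hcoef
  set u' : Fin m → ℝ := ∑ i, coef i • ofE (V i) with hu'
  have hMu : M.mulVec u' = ofE w := by
    have step1 : M.mulVec u' = ∑ i, coef i • (M.mulVec (ofE (V i))) := by
      rw [hu',
        show M.mulVec (∑ i, coef i • ofE (V i)) = ∑ i, M.mulVec (coef i • ofE (V i)) from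
          map_sum M.mulVecLin _ _]
      simp only [Matrix.mulVec_smul]
    rw [step1]
    have step2 : ∀ i, coef i • (eig i • ofE (V i)) = c i • ofE (V i) := by
      intro i
      by_cases h0 : eig i = 0
      · simp [hcoef, h0, hczero i h0]
      · simp only [hcoef, if_neg h0, smul_smul]
        rw [div_mul_cancel₀ _ h0]
    calc ∑ i, coef i • (M.mulVec (ofE (V i)))
        = ∑ i, c i • ofE (V i) := by
          refine Finset.sum_congr rfl fun i _ => ?_
          rw [heigvec i, step2 i]
      _ = ofE (∑ i, c i • V i) := by simp [ofE]
      _ = ofE w := by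
          refine congrArg ofE ?_
          conv_rhs => rw [← V.sum_repr w]
          refine Finset.sum_congr rfl fun i _ => ?_
          rw [V.repr_apply_apply]
  refine ⟨Aᵀ.mulVec u', ?_, ?_⟩
  · rw [Matrix.mulVec_mulVec, ← hM, hMu]
  · have hd2 : ‖toE (Aᵀ.mulVec u')‖^2 = (Aᵀ.mulVec u') ⬝ᵥ (Aᵀ.mulVec u') := by
      rw [normE_sq]; rfl
    have hdd : (Aᵀ.mulVec u') ⬝ᵥ (Aᵀ.mulVec u') = ofE w ⬝ᵥ u' := by
      rw [Matrix.dotProduct_mulVec, Matrix.vecMul_transpose, Matrix.mulVec_mulVec, ← hM, hMu]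
    have hwu : ofE w ⬝ᵥ u' = ∑ i, coef i * c i := by
      have : ofE w ⬝ᵥ u' = (inner ℝ w (toE u') : ℝ) := by rw [innerE]; rfl
      rw [this, show toE u' = ∑ i, coef i • V i by simp [hu', toE, ofE], inner_sum]
      refine Finset.sum_congr rfl fun i _ => ?_
      rw [real_inner_smul_right, hc]
      simp only
      rw [real_inner_comm]
    have hterm : ∀ i, lamPlus * (coef i * c i) ≤ c i ^ 2 := by
      intro i
      by_cases h0 : eig i = 0
      · simp [hcoef, h0]
        positivity
      · have hpos : 0 < eig i := lt_of_le_of_ne (heig0 i) (Ne.symm h0)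
        have hmem : eig i ∈ {t : ℝ | 0 < t ∧ ∃ j, hH.eigenvalues j = t} := ⟨hpos, i, rfl⟩
        have hbdd : BddBelow {t : ℝ | 0 < t ∧ ∃ j, hH.eigenvalues j = t} :=
          ⟨0, fun t ht => ht.1.le⟩
        have hle : lamPlus ≤ eig i := hlam ▸ csInf_le hbdd hmem
        have h1 : coef i * c i = c i ^ 2 / eig i := by
          simp only [hcoef, if_neg h0]
          ring
        rw [h1]
        calc lamPlus * (c i ^ 2 / eig i) ≤ eig i * (c i ^ 2 / eig i) :=
              mul_le_mul_of_nonneg_right hle (by positivity)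
          _ = c i ^ 2 := by field_simp
    have hparseval : ‖w‖ ^ 2 = ∑ i, c i ^ 2 := by
      have := V.sum_inner_mul_inner w w
      rw [← real_inner_self_eq_norm_sq, ← this]
      refine Finset.sum_congr rfl fun i _ => ?_
      rw [hc]
      simp only
      rw [real_inner_comm, sq]
    rw [hd2, hdd, hwu, hparseval, Finset.mul_sum]
    exact Finset.sum_le_sum fun i _ => hterm i
section Grad2
variable {E : Type*} [NormedAddCommGroup E] [InnerProductSpace ℝ E] [CompleteSpace E]

lemma inner_gradient_apply (f : E → ℝ) (x v : E) :
    (inner ℝ (gradient f x) v : ℝ) = fderiv ℝ f x v := by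
  rw [gradient]
  exact InnerProductSpace.toDual_symm_apply

lemma hasFDerivAt_half_norm_sq (μ : ℝ) (x : E) :
    HasFDerivAt (fun w : E => μ / 2 * ‖w‖ ^ 2) (μ • (innerSL ℝ x)) x := by
  have h := ((hasFDerivAt_id x).inner ℝ (hasFDerivAt_id x)).const_mul (μ/2)
  refine (h.congr_fderiv ?_).congr_of_eventuallyEq (Filter.Eventually.of_forall fun z => ?_)
  rotate_left
  ·
    simp [real_inner_self_eq_norm_sq]
  · ext v
    simp [fderivInnerCLM_apply, real_inner_comm]
    ring

lemma strong_mono {f : E → ℝ} (μ : ℝ)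
    (hsc : ConvexOn ℝ Set.univ (fun x => f x - μ / 2 * ‖x‖ ^ 2))
    (hd : Differentiable ℝ f) (x y : E) :
    μ * ‖x - y‖ ^ 2 ≤ inner ℝ (gradient f x - gradient f y) (x - y) := by
  set g : E → ℝ := fun z => f z - μ / 2 * ‖z‖ ^ 2 with hg
  have hgz : ∀ z : E, HasFDerivAt g (fderiv ℝ f z - μ • innerSL ℝ z) z :=
    fun z => ((hd z).hasFDerivAt).sub (hasFDerivAt_half_norm_sq μ z)
  have hgd : Differentiable ℝ g := fun z => (hgz z).differentiableAt
  have h1 := convex_first_order hsc hgd x y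
  have h2 := convex_first_order hsc hgd y x
  rw [show fderiv ℝ g x = _ from (hgz x).fderiv] at h1
  rw [show fderiv ℝ g y = _ from (hgz y).fderiv] at h2
  simp only [ContinuousLinearMap.sub_apply, ContinuousLinearMap.smul_apply, innerSL_apply_apply,
    smul_eq_mul] at h1 h2
  have e1 : fderiv ℝ f x (y - x) = -(inner ℝ (gradient f x) (x - y) : ℝ) := by
    rw [← inner_gradient_apply, show y - x = -(x - y) by abel, inner_neg_right]
  have e2 : fderiv ℝ f y (x - y) = (inner ℝ (gradient f y) (x - y) : ℝ) :=
    (inner_gradient_apply f y _).symm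
  have e3 : (inner ℝ x (y - x) : ℝ) + (inner ℝ y (x - y) : ℝ) = -‖x - y‖ ^ 2 := by
    have hns := norm_sub_sq_real x y
    have c1 : (inner ℝ x (y - x) : ℝ) = inner ℝ x y - ‖x‖ ^ 2 := by
      rw [inner_sub_right, real_inner_self_eq_norm_sq]
    have c2 : (inner ℝ y (x - y) : ℝ) = inner ℝ x y - ‖y‖ ^ 2 := by
      rw [inner_sub_right, real_inner_self_eq_norm_sq, real_inner_comm]
    rw [c1, c2]; linarith
  have e4 : (inner ℝ (gradient f x - gradient f y) (x - y) : ℝ)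
      = inner ℝ (gradient f x) (x - y) - inner ℝ (gradient f y) (x - y) := inner_sub_left _ _ _
  have hgx : g x = f x - μ / 2 * ‖x‖ ^ 2 := rfl
  have hgy : g y = f y - μ / 2 * ‖y‖ ^ 2 := rfl
  rw [e4]
  rw [e1] at h1
  rw [e2] at h2
  rw [hgx, hgy] at h1 h2
  have e5 : μ * ((inner ℝ x (y - x) : ℝ) + (inner ℝ y (x - y) : ℝ)) = -(μ * ‖x - y‖ ^ 2) := by
    rw [e3]; ring
  linarith
end Grad2

end Helpers


/-- Sensitivity of minimizers of a strongly convex smooth function over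
shifted affine-preimage constraint sets:
`‖x* - y*‖ ≤ ((1 + 2L/μ)/√(λ_min⁺(AAᵀ))) ‖b₂ - b₁‖`. -/
theorem stmt_5 (n m : ℕ) (h : EuclideanSpace ℝ (Fin n) → ℝ)
    (μ L : ℝ) (hμ : 0 < μ) (hL : 0 ≤ L)
    (hsc : ConvexOn ℝ Set.univ (fun x => h x - μ / 2 * ‖x‖ ^ 2))
    (hdiff : Differentiable ℝ h)
    (hlip : LipschitzWith (Real.toNNReal L) (fun x => gradient h x))
    (A : Matrix (Fin m) (Fin n) ℝ)
    (C : Set (EuclideanSpace ℝ (Fin m))) (hCclosed : IsClosed C) (hCconv : Convex ℝ C)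
    (b₁ b₂ : EuclideanSpace ℝ (Fin m))
    (hb₁ : ∃ u, A.mulVec u = ofE b₁) (hb₂ : ∃ u, A.mulVec u = ofE b₂)
    (U₁ U₂ : Set (EuclideanSpace ℝ (Fin n)))
    (hU₁ : U₁ = {x | toE (A.mulVec (ofE x)) + b₁ ∈ C})
    (hU₂ : U₂ = {x | toE (A.mulVec (ofE x)) + b₂ ∈ C})
    (hU₁ne : U₁.Nonempty) (hU₂ne : U₂.Nonempty)
    (xstar ystar : EuclideanSpace ℝ (Fin n))
    (hx : xstar ∈ U₁ ∧ ∀ x ∈ U₁, h xstar ≤ h x)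
    (hy : ystar ∈ U₂ ∧ ∀ y ∈ U₂, h ystar ≤ h y)
    (hH : (A * Aᵀ).IsHermitian)
    (lamPlus : ℝ)
    (hlam : lamPlus = sInf {t : ℝ | 0 < t ∧ ∃ i, hH.eigenvalues i = t}) :
    ‖xstar - ystar‖ ≤ (1 + 2 * L / μ) / Real.sqrt lamPlus * ‖b₂ - b₁‖ := by
  classical
  obtain ⟨hxU, hxmin⟩ := hx
  obtain ⟨hyU, hymin⟩ := hy
  have hU₁conv : Convex ℝ U₁ := hU₁ ▸ U_convex A hCconv b₁
  have hU₂conv : Convex ℝ U₂ := hU₂ ▸ U_convex A hCconv b₂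
  have hPSD : (A * Aᵀ).PosSemidef := by
    have := Matrix.posSemidef_self_mul_conjTranspose A
    rwa [conjTranspose_eq_transpose_of_trivial] at this
  have hLdivμ : 0 ≤ L / μ := div_nonneg hL hμ.le
  by_cases hne : {t : ℝ | 0 < t ∧ ∃ i, hH.eigenvalues i = t}.Nonempty
  · -- main case
    have hlampos : 0 < lamPlus := by
      rw [hlam]
      have hfin : {t : ℝ | 0 < t ∧ ∃ i, hH.eigenvalues i = t}.Finite :=
        Set.Finite.subset (Set.finite_range hH.eigenvalues)
          (fun t ht => ht.2.imp fun i hi => hi)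
      exact (hne.csInf_mem hfin).1
    have hsqrtpos : 0 < Real.sqrt lamPlus := Real.sqrt_pos.2 hlampos
    obtain ⟨z₁, hz₁⟩ := hb₁
    obtain ⟨z₂, hz₂⟩ := hb₂
    have hwz : A.mulVec (z₁ - z₂) = ofE (b₁ - b₂) := by
      rw [Matrix.mulVec_sub, hz₁, hz₂]; rfl
    obtain ⟨d, hd, hdbound⟩ := spectral_solve A hH lamPlus hlam (b₁ - b₂) (z₁ - z₂) hwz
    set y' : EuclideanSpace ℝ (Fin n) := ystar - toE d with hy'
    have hyd : y' ∈ U₁ := by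
      rw [hU₁, Set.mem_setOf_eq]
      have hkey : toE (A.mulVec (ofE y')) + b₁ = toE (A.mulVec (ofE ystar)) + b₂ := by
        rw [show ofE y' = ofE ystar - d from rfl, Matrix.mulVec_sub, hd]
        rw [show toE (A.mulVec (ofE ystar) - ofE (b₁ - b₂))
          = toE (A.mulVec (ofE ystar)) - (b₁ - b₂) from rfl]
        abel
      rw [hkey]
      have := hyU
      rw [hU₂, Set.mem_setOf_eq] at this
      exact this
    have hxd : xstar + toE d ∈ U₂ := by
      rw [hU₂, Set.mem_setOf_eq]
      have hkey : toE (A.mulVec (ofE (xstar + toE d))) + b₂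
          = toE (A.mulVec (ofE xstar)) + b₁ := by
        rw [show ofE (xstar + toE d) = ofE xstar + d from rfl, Matrix.mulVec_add, hd]
        rw [show toE (A.mulVec (ofE xstar) + ofE (b₁ - b₂))
          = toE (A.mulVec (ofE xstar)) + (b₁ - b₂) from rfl]
        abel
      rw [hkey]
      have := hxU
      rw [hU₁, Set.mem_setOf_eq] at this
      exact this
    -- variational inequalities
    have a1 : 0 ≤ (inner ℝ (gradient h xstar) (y' - xstar) : ℝ) := by
      rw [inner_gradient_apply]
      exact variational_ineq hdiff hU₁conv hxU hxmin hyd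
    have a2 : 0 ≤ (inner ℝ (gradient h ystar) (xstar - y') : ℝ) := by
      have hveq : xstar + toE d - ystar = xstar - y' := by rw [hy']; abel
      rw [← hveq, inner_gradient_apply]
      exact variational_ineq hdiff hU₂conv hyU hymin hxd
    have hmono : μ * ‖xstar - y'‖ ^ 2
        ≤ (inner ℝ (gradient h xstar - gradient h y') (xstar - y') : ℝ) :=
      strong_mono μ hsc hdiff xstar y'
    have hlipd : ‖gradient h y' - gradient h ystar‖ ≤ L * ‖toE d‖ := by
      have h1 := hlip.norm_sub_le y' ystar
      have h2 : ((Real.toNNReal L : NNReal) : ℝ) = L := Real.coe_toNNReal L hL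
      rw [h2] at h1
      have h3 : y' - ystar = -(toE d) := by rw [hy']; abel
      rw [h3, norm_neg] at h1
      exact h1
    have eid : (inner ℝ (gradient h xstar - gradient h y') (xstar - y') : ℝ)
        = -(inner ℝ (gradient h xstar) (y' - xstar) : ℝ)
          - (inner ℝ (gradient h ystar) (xstar - y') : ℝ)
          - (inner ℝ (gradient h y' - gradient h ystar) (xstar - y') : ℝ) := by
      simp only [inner_sub_left, inner_sub_right]
      ring
    have hcs : -(inner ℝ (gradient h y' - gradient h ystar) (xstar - y') : ℝ)
        ≤ L * ‖toE d‖ * ‖xstar - y'‖ := by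
      have h1 := real_inner_le_norm (gradient h ystar - gradient h y') (xstar - y')
      have h2 : (inner ℝ (gradient h ystar - gradient h y') (xstar - y') : ℝ)
          = -(inner ℝ (gradient h y' - gradient h ystar) (xstar - y') : ℝ) := by
        simp only [inner_sub_left]; ring
      rw [h2] at h1
      have h3 : ‖gradient h ystar - gradient h y'‖ = ‖gradient h y' - gradient h ystar‖ :=
        norm_sub_rev _ _
      rw [h3] at h1
      calc -(inner ℝ (gradient h y' - gradient h ystar) (xstar - y') : ℝ)
          ≤ ‖gradient h y' - gradient h ystar‖ * ‖xstar - y'‖ := h1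
        _ ≤ L * ‖toE d‖ * ‖xstar - y'‖ :=
            mul_le_mul_of_nonneg_right hlipd (norm_nonneg _)
    have hr : μ * ‖xstar - y'‖ ^ 2 ≤ L * ‖toE d‖ * ‖xstar - y'‖ := by
      have := hmono
      rw [eid] at this
      linarith
    have hrle : ‖xstar - y'‖ ≤ (L / μ) * ‖toE d‖ := by
      rcases eq_or_lt_of_le (norm_nonneg (xstar - y')) with hz | hz
      · rw [← hz]
        positivity
      · have h1 : μ * ‖xstar - y'‖ ≤ L * ‖toE d‖ := by
          have h2 : μ * ‖xstar - y'‖ * ‖xstar - y'‖ ≤ (L * ‖toE d‖) * ‖xstar - y'‖ := by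
            calc μ * ‖xstar - y'‖ * ‖xstar - y'‖ = μ * ‖xstar - y'‖ ^ 2 := by ring
              _ ≤ L * ‖toE d‖ * ‖xstar - y'‖ := hr
          exact le_of_mul_le_mul_right h2 hz
        rw [div_mul_eq_mul_div, le_div_iff₀ hμ]
        linarith
    have hdnorm : ‖toE d‖ ≤ ‖b₁ - b₂‖ / Real.sqrt lamPlus := by
      have h1 : ‖toE d‖ ^ 2 ≤ (‖b₁ - b₂‖ / Real.sqrt lamPlus) ^ 2 := by
        rw [div_pow, Real.sq_sqrt hlampos.le, le_div_iff₀ hlampos]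
        linarith
      have h2 := Real.sqrt_le_sqrt h1
      rwa [Real.sqrt_sq (norm_nonneg _), Real.sqrt_sq (by positivity)] at h2
    have htri : ‖xstar - ystar‖ ≤ ‖xstar - y'‖ + ‖toE d‖ := by
      have he : xstar - ystar = (xstar - y') + (-(toE d)) := by rw [hy']; abel
      rw [he]
      calc ‖(xstar - y') + (-(toE d))‖ ≤ ‖xstar - y'‖ + ‖-(toE d)‖ := norm_add_le _ _
        _ = ‖xstar - y'‖ + ‖toE d‖ := by rw [norm_neg]
    have hbrev : ‖b₁ - b₂‖ = ‖b₂ - b₁‖ := norm_sub_rev _ _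
    calc ‖xstar - ystar‖ ≤ (L / μ) * ‖toE d‖ + ‖toE d‖ := by linarith
      _ = (1 + L / μ) * ‖toE d‖ := by ring
      _ ≤ (1 + L / μ) * (‖b₁ - b₂‖ / Real.sqrt lamPlus) :=
          mul_le_mul_of_nonneg_left hdnorm (by linarith)
      _ = (1 + L / μ) / Real.sqrt lamPlus * ‖b₂ - b₁‖ := by
          rw [hbrev]; ring
      _ ≤ (1 + 2 * L / μ) / Real.sqrt lamPlus * ‖b₂ - b₁‖ := by
          have hnum : (1 + L / μ) ≤ 1 + 2 * L / μ := by
            have h5 : L / μ ≤ 2 * L / μ := by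
              rw [mul_div_assoc]
              linarith
            linarith
          have hmul : (1 + L / μ) / Real.sqrt lamPlus
              ≤ (1 + 2 * L / μ) / Real.sqrt lamPlus :=
            (div_le_div_iff_of_pos_right hsqrtpos).2 hnum
          exact mul_le_mul_of_nonneg_right hmul (norm_nonneg _)
  · -- degenerate case : all eigenvalues zero
    have heig : ∀ i, hH.eigenvalues i = 0 := by
      intro i
      have h0 : 0 ≤ hH.eigenvalues i := hPSD.eigenvalues_nonneg i
      rcases h0.eq_or_lt with h1 | h1
      · exact h1.symm
      · exact absurd ⟨hH.eigenvalues i, h1, i, rfl⟩ hne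
    have hA0 : A = 0 := A_eq_zero A hH heig
    have hb₁0 : b₁ = 0 := by
      obtain ⟨u, hu⟩ := hb₁
      rw [hA0, Matrix.zero_mulVec] at hu
      calc b₁ = toE (ofE b₁) := rfl
        _ = toE 0 := by rw [← hu]
        _ = 0 := rfl
    have hb₂0 : b₂ = 0 := by
      obtain ⟨u, hu⟩ := hb₂
      rw [hA0, Matrix.zero_mulVec] at hu
      calc b₂ = toE (ofE b₂) := rfl
        _ = toE 0 := by rw [← hu]
        _ = 0 := rfl
    have hUeq : U₂ = U₁ := by rw [hU₁, hU₂, hb₁0, hb₂0]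
    have hstrict : StrictConvexOn ℝ U₁ h := by
      have hstrong : StrongConvexOn Set.univ μ h := strongConvexOn_iff_convex.2 hsc
      exact (hstrong.strictConvexOn hμ).subset (Set.subset_univ _) hU₁conv
    have hxy : xstar = ystar := by
      apply hstrict.eq_of_isMinOn (isMinOn_iff.2 hxmin) ?_ hxU ?_
      · exact isMinOn_iff.2 (fun z hz => hymin z (hUeq ▸ hz))
      · rw [← hUeq]; exact hyU
    rw [hxy, hb₁0, hb₂0]
    simp
end

section
/- Let (Lₖ) be a nonincreasing real sequence bounded below by L*, and suppose there exist constants a, b, c > 0 and α ∈ (1, 2) such that for all sufficiently large k, Lₖ₊₁ - Lₖ ≤ -c(Lₖ₊₁ - L*)^{2/α}. Then Lₖ - L* = O(k^{-α/(2-α)}); in particular, Lₖ - L* ∈ o(1/k). -/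
open Filter

open Real

lemma aux_bern {s t : ℝ} (hs0 : 0 ≤ s) (hs1 : s ≤ 1) (ht0 : 0 < t) (ht1 : t ≤ 1) :
    1 + s * (1 - t) ≤ t ^ (-s) := by
  have h1 : t ^ s ≤ 1 + s * (t - 1) := by
    have := rpow_one_add_le_one_add_mul_self (s := t - 1) (by linarith) hs0 hs1
    simpa using this
  have hts : 0 < t ^ s := Real.rpow_pos_of_pos ht0 s
  have key : (1 + s * (1 - t)) * t ^ s ≤ 1 := by
    have hnn : 0 ≤ 1 + s * (1 - t) := by nlinarith
    calc (1 + s * (1 - t)) * t ^ s ≤ (1 + s * (1 - t)) * (1 + s * (t - 1)) :=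
          mul_le_mul_of_nonneg_left h1 hnn
      _ ≤ 1 := by nlinarith [sq_nonneg (s * (1 - t))]
  rw [Real.rpow_neg ht0.le, ← one_div]
  exact (le_div_iff₀ hts).mpr key

lemma aux_diff {s a b : ℝ} (hs0 : 0 ≤ s) (hs1 : s ≤ 1) (hb : 0 < b) (hba : b ≤ a) :
    a ^ (-s) + s * (a - b) * a ^ (-s - 1) ≤ b ^ (-s) := by
  have ha : 0 < a := lt_of_lt_of_le hb hba
  have ht0 : 0 < b / a := div_pos hb ha
  have ht1 : b / a ≤ 1 := (div_le_one ha).mpr hba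
  have h := aux_bern hs0 hs1 ht0 ht1
  have has : 0 < a ^ (-s) := Real.rpow_pos_of_pos ha _
  have e1 : a ^ (-s - 1) = a ^ (-s) * a⁻¹ := by
    rw [show -s - 1 = -s + (-1) by ring, Real.rpow_add ha, Real.rpow_neg_one]
  have e2 : a ^ (-s) * (b / a) ^ (-s) = b ^ (-s) := by
    rw [Real.div_rpow hb.le ha.le]
    field_simp
  calc a ^ (-s) + s * (a - b) * a ^ (-s - 1)
      = a ^ (-s) * (1 + s * (1 - b / a)) := by rw [e1]; field_simp
    _ ≤ a ^ (-s) * (b / a) ^ (-s) := mul_le_mul_of_nonneg_left h has.le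
    _ = b ^ (-s) := e2

/-- main bound -/
lemma aux_main (L : ℕ → ℝ) (Lstar : ℝ) (hmono : Antitone L)
    (hbound : ∀ k, Lstar ≤ L k)
    (α c : ℝ) (hα : 1 < α ∧ α < 2) (hc : 0 < c)
    (hdec : ∃ K : ℕ, ∀ k ≥ K,
      L (k + 1) - L k ≤ -c * (L (k + 1) - Lstar) ^ (2 / α)) :
    ∃ M : ℝ, 0 < M ∧ ∀ k : ℕ, 1 ≤ k →
        L k - Lstar ≤ M * (k : ℝ) ^ (-(α / (2 - α))) := by
  obtain ⟨hα1, hα2⟩ := hα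
  obtain ⟨K, hK⟩ := hdec
  have hαpos : (0:ℝ) < α := by linarith
  obtain ⟨u, hu⟩ : ∃ u : ℕ → ℝ, u = fun k => L k - Lstar := ⟨_, rfl⟩
  have hu0 : ∀ k, 0 ≤ u k := fun k => by simpa [hu] using hbound k
  have humono : Antitone u := fun i j hij => by
    simpa [hu] using sub_le_sub_right (hmono hij) Lstar
  obtain ⟨p, hpdef⟩ : ∃ p : ℝ, p = 2 / α := ⟨_, rfl⟩
  have hp1 : 1 < p := by rw [hpdef]; exact (one_lt_div hαpos).mpr hα2
  have hp2 : p < 2 := by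
    rw [hpdef, div_lt_iff₀ hαpos]; linarith
  obtain ⟨s, hsdef⟩ : ∃ s : ℝ, s = p - 1 := ⟨_, rfl⟩
  have hs0 : 0 < s := by rw [hsdef]; linarith
  have hs1 : s < 1 := by rw [hsdef]; linarith
  obtain ⟨β, hβdef⟩ : ∃ b : ℝ, b = α / (2 - α) := ⟨_, rfl⟩
  have hβs : β = 1 / s := by
    have e : p - 1 = (2 - α) / α := by rw [hpdef]; field_simp
    rw [hβdef, hsdef, e, one_div_div]
  have hβ1 : 1 < β := by
    rw [hβs, lt_div_iff₀ hs0]; linarith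
  -- general small-k helper
  have small : ∀ (N : ℕ) (C : ℝ), 0 < N → 0 ≤ C →
      ∀ k : ℕ, 1 ≤ k → k ≤ N → u k ≤ (C + 1) * ((N:ℝ) ^ β) * (k:ℝ) ^ (-β) → True := by
    intro _ _ _ _ _ _ _ _; trivial
  have hrec : ∀ k ≥ K, c * (u (k+1)) ^ p ≤ u k - u (k+1) := by
    intro k hk
    have := hK k hk
    simp only [hu, hpdef]
    nlinarith [this]
  by_cases hpos : ∀ k, 0 < u k
  · -- all positive case
    have hUK : 0 < u K := hpos K
    obtain ⟨δ, hδdef⟩ : ∃ d : ℝ, d = min ((2 ^ s - 1) * (u K) ^ (-s)) (s * c * 2 ^ (-p)) := ⟨_, rfl⟩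
    have h2s : (1:ℝ) < 2 ^ s := by
      rw [show (1:ℝ) = (2:ℝ) ^ (0:ℝ) by simp]
      exact Real.rpow_lt_rpow_of_exponent_lt one_lt_two hs0
    have hδ : 0 < δ := by
      rw [hδdef]
      apply lt_min
      · have := Real.rpow_pos_of_pos hUK (-s)
        nlinarith
      · have := Real.rpow_pos_of_pos (two_pos (α := ℝ)) (-p)
        positivity
    have step : ∀ k, K ≤ k → (u k) ^ (-s) + δ ≤ (u (k+1)) ^ (-s) := by
      intro k hk
      have ha : 0 < u k := hpos k
      have hb : 0 < u (k+1) := hpos (k+1)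
      have hba : u (k+1) ≤ u k := humono (Nat.le_succ k)
      by_cases hhalf : 2 * u (k+1) ≤ u k
      · -- big drop
        have h1 : (u k / 2) ^ (-s) ≤ (u (k+1)) ^ (-s) :=
          Real.rpow_le_rpow_of_nonpos hb (by linarith) (by linarith)
        have h2 : (u k / 2) ^ (-s) = 2 ^ s * (u k) ^ (-s) := by
          rw [div_eq_mul_inv, Real.mul_rpow ha.le (by positivity), Real.inv_rpow (by norm_num),
            Real.rpow_neg (by norm_num : (0:ℝ) ≤ 2), inv_inv, mul_comm]
        have h3 : (u K) ^ (-s) ≤ (u k) ^ (-s) :=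
          Real.rpow_le_rpow_of_nonpos ha (humono hk) (by linarith)
        have hδ1 : δ ≤ (2 ^ s - 1) * (u K) ^ (-s) := hδdef ▸ min_le_left _ _
        nlinarith [Real.rpow_pos_of_pos ha (-s)]
      · -- small drop
        push_neg at hhalf
        have hdiff := aux_diff hs0.le hs1.le hb hba
        have hsp : -s - 1 = -p := by rw [hsdef]; ring
        have hcb : c * (u (k+1)) ^ p ≤ u k - u (k+1) := hrec k hk
        have h4 : (2 * u (k+1)) ^ (-p) < (u k) ^ (-p) :=
          Real.rpow_lt_rpow_of_neg ha hhalf (by linarith)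
        have h5 : (2 * u (k+1)) ^ (-p) = 2 ^ (-p) * (u (k+1)) ^ (-p) :=
          Real.mul_rpow (by norm_num) hb.le
        have h6 : (u (k+1)) ^ p * (u (k+1)) ^ (-p) = 1 := by
          rw [← Real.rpow_add hb]; simp
        have h7 : s * c * 2 ^ (-p) ≤ s * (u k - u (k+1)) * (u k) ^ (-p) := by
          have e : s * c * 2 ^ (-p) = s * (c * (u (k+1)) ^ p) * ((2 * u (k+1)) ^ (-p)) := by
            rw [h5]; linear_combination (-(s * c * 2 ^ (-p))) * h6
          have hpos1 : 0 < (u (k+1)) ^ p := Real.rpow_pos_of_pos hb p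
          have hstep1 : s * (c * (u (k+1)) ^ p) ≤ s * (u k - u (k+1)) :=
            mul_le_mul_of_nonneg_left hcb hs0.le
          have hnn : 0 ≤ s * (c * (u (k+1)) ^ p) := by positivity
          rw [e]
          calc s * (c * (u (k+1)) ^ p) * ((2 * u (k+1)) ^ (-p))
              ≤ s * (c * (u (k+1)) ^ p) * ((u k) ^ (-p)) :=
                mul_le_mul_of_nonneg_left h4.le hnn
            _ ≤ s * (u k - u (k+1)) * ((u k) ^ (-p)) :=
                mul_le_mul_of_nonneg_right hstep1 (Real.rpow_pos_of_pos ha (-p)).le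
        have hδ2 : δ ≤ s * c * 2 ^ (-p) := hδdef ▸ min_le_right _ _
        rw [hsp] at hdiff
        linarith
    have iter : ∀ n : ℕ, (u K) ^ (-s) + n * δ ≤ (u (K + n)) ^ (-s) := by
      intro n
      induction n with
      | zero => simp
      | succ m ih =>
        have := step (K + m) (Nat.le_add_right K m)
        push_cast
        rw [show K + (m + 1) = (K + m) + 1 by ring]
        push_cast at ih
        linarith
    -- invert: for n ≥ 1, u (K+n) ≤ (n*δ)^(-β)
    have inv : ∀ n : ℕ, 1 ≤ n → u (K + n) ≤ ((n:ℝ) * δ) ^ (-β) := by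
      intro n hn
      have hx : 0 < u (K + n) := hpos _
      have hy : 0 < (n:ℝ) * δ := by
        have : (1:ℝ) ≤ (n:ℝ) := by exact_mod_cast hn
        nlinarith
      have h1 : (n:ℝ) * δ ≤ (u (K + n)) ^ (-s) := by
        have := iter n
        have hK0 : 0 < (u K) ^ (-s) := Real.rpow_pos_of_pos hUK _
        linarith
      have h2 : ((u (K + n)) ^ (-s)) ^ (-β) ≤ ((n:ℝ) * δ) ^ (-β) :=
        Real.rpow_le_rpow_of_nonpos hy h1 (by linarith)
      have h3 : ((u (K + n)) ^ (-s)) ^ (-β) = u (K + n) := by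
        rw [← Real.rpow_mul hx.le]
        rw [show -s * -β = 1 by rw [hβs]; field_simp]
        exact Real.rpow_one _
      rwa [h3] at h2
    obtain ⟨N, hN⟩ : ∃ N : ℕ, N = 2 * K + 2 := ⟨_, rfl⟩
    obtain ⟨M, hM⟩ : ∃ M : ℝ, M = max ((u 1 + 1) * ((N:ℝ) ^ β)) ((δ/2) ^ (-β)) := ⟨_, rfl⟩
    have hNpos : (0:ℝ) < (N:ℝ) := by rw [hN]; positivity
    have hM0 : 0 < M := by
      rw [hM]
      apply lt_max_of_lt_left
      have h1 : 0 < (N:ℝ) ^ β := Real.rpow_pos_of_pos hNpos β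
      nlinarith [hu0 1]
    refine ⟨M, hM0, ?_⟩
    intro k hk
    rw [show L k - Lstar = u k by rw [hu], show -(α / (2 - α)) = -β by rw [hβdef]]
    have hk0 : (0:ℝ) < (k:ℝ) := by exact_mod_cast hk
    have hkb : 0 < (k:ℝ) ^ (-β) := Real.rpow_pos_of_pos hk0 _
    by_cases hbig : N ≤ k
    · -- large k
      set n : ℕ := k - K with hn
      have hkn : k = K + n := by omega
      have hn1 : 1 ≤ n := by omega
      have hhalf : (k:ℝ) / 2 ≤ (n:ℝ) := by
        have : k ≤ 2 * n := by omega
        have : (k:ℝ) ≤ 2 * (n:ℝ) := by exact_mod_cast this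
        linarith
      have h1 : u k ≤ ((n:ℝ) * δ) ^ (-β) := by rw [hkn]; exact inv n hn1
      have h2 : ((n:ℝ) * δ) ^ (-β) ≤ ((k:ℝ) / 2 * δ) ^ (-β) := by
        apply Real.rpow_le_rpow_of_nonpos (by positivity) (by nlinarith) (by linarith)
      have h3 : ((k:ℝ) / 2 * δ) ^ (-β) = (δ/2) ^ (-β) * (k:ℝ) ^ (-β) := by
        rw [show (k:ℝ)/2*δ = (δ/2) * (k:ℝ) by ring, Real.mul_rpow (by positivity) hk0.le]
      have h4 : (δ/2) ^ (-β) ≤ M := hM ▸ le_max_right _ _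
      calc u k ≤ ((n:ℝ) * δ) ^ (-β) := h1
        _ ≤ ((k:ℝ) / 2 * δ) ^ (-β) := h2
        _ = (δ/2) ^ (-β) * (k:ℝ) ^ (-β) := h3
        _ ≤ M * (k:ℝ) ^ (-β) := mul_le_mul_of_nonneg_right h4 hkb.le
    · -- small k
      push_neg at hbig
      have hkN : (k:ℝ) ≤ (N:ℝ) := by exact_mod_cast hbig.le
      have h1 : u k ≤ u 1 := humono hk
      have h2 : ((N:ℝ)) ^ (-β) ≤ (k:ℝ) ^ (-β) :=
        Real.rpow_le_rpow_of_nonpos hk0 hkN (by linarith)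
      have h3 : ((N:ℝ) ^ β) * ((N:ℝ) ^ (-β)) = 1 := by
        rw [← Real.rpow_add hNpos]; simp
      have h4 : (u 1 + 1) * ((N:ℝ) ^ β) ≤ M := hM ▸ le_max_left _ _
      have h5 : 0 ≤ (u 1 + 1) * ((N:ℝ) ^ β) :=
        mul_nonneg (by linarith [hu0 1]) (Real.rpow_pos_of_pos hNpos β).le
      have e : (u 1 + 1) * ((N:ℝ) ^ β) * ((N:ℝ) ^ (-β)) = u 1 + 1 := by
        rw [mul_assoc, h3, mul_one]
      calc u k ≤ u 1 := h1
        _ ≤ (u 1 + 1) * ((N:ℝ) ^ β) * ((N:ℝ) ^ (-β)) := by rw [e]; linarith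
        _ ≤ (u 1 + 1) * ((N:ℝ) ^ β) * ((k:ℝ) ^ (-β)) := by
            apply mul_le_mul_of_nonneg_left h2 h5
        _ ≤ M * (k:ℝ) ^ (-β) := mul_le_mul_of_nonneg_right h4 hkb.le
  · -- some u k0 = 0
    push_neg at hpos
    obtain ⟨k0, hk0⟩ := hpos
    have hzero : ∀ k, k0 ≤ k → u k ≤ 0 := fun k hk => le_trans (humono hk) hk0
    obtain ⟨N, hN⟩ : ∃ N : ℕ, N = k0 + 1 := ⟨_, rfl⟩
    obtain ⟨M, hM⟩ : ∃ M : ℝ, M = (u 1 + 1) * ((N:ℝ) ^ β) := ⟨_, rfl⟩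
    have hNpos : (0:ℝ) < (N:ℝ) := by rw [hN]; positivity
    have hM0 : 0 < M := by
      rw [hM]
      have h1 : 0 < (N:ℝ) ^ β := Real.rpow_pos_of_pos hNpos β
      nlinarith [hu0 1]
    refine ⟨M, hM0, ?_⟩
    intro k hk
    rw [show L k - Lstar = u k by rw [hu], show -(α / (2 - α)) = -β by rw [hβdef]]
    have hk0' : (0:ℝ) < (k:ℝ) := by exact_mod_cast hk
    have hkb : 0 < (k:ℝ) ^ (-β) := Real.rpow_pos_of_pos hk0' _
    by_cases hbig : k0 ≤ k
    · exact le_trans (hzero k hbig) (mul_pos hM0 hkb).le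
    · have hbig' : k < k0 := Nat.lt_of_not_le hbig
      have hkN : (k:ℝ) ≤ (N:ℝ) := by
        have : k ≤ N := by omega
        exact_mod_cast this
      have h1 : u k ≤ u 1 := humono hk
      have h2 : ((N:ℝ)) ^ (-β) ≤ (k:ℝ) ^ (-β) :=
        Real.rpow_le_rpow_of_nonpos hk0' hkN (by linarith)
      have h3 : ((N:ℝ) ^ β) * ((N:ℝ) ^ (-β)) = 1 := by
        rw [← Real.rpow_add hNpos]; simp
      have h5 : 0 ≤ (u 1 + 1) * ((N:ℝ) ^ β) :=
        mul_nonneg (by linarith [hu0 1]) (Real.rpow_pos_of_pos hNpos β).le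
      have e : (u 1 + 1) * ((N:ℝ) ^ β) * ((N:ℝ) ^ (-β)) = u 1 + 1 := by
        rw [mul_assoc, h3, mul_one]
      calc u k ≤ u 1 := h1
        _ ≤ (u 1 + 1) * ((N:ℝ) ^ β) * ((N:ℝ) ^ (-β)) := by rw [e]; linarith
        _ ≤ (u 1 + 1) * ((N:ℝ) ^ β) * ((k:ℝ) ^ (-β)) := mul_le_mul_of_nonneg_left h2 h5
        _ = M * (k:ℝ) ^ (-β) := by rw [hM]

/-- If `(Lₖ)` is nonincreasing, bounded below by `L*`, and for all
sufficiently large `k`, `Lₖ₊₁ - Lₖ ≤ -c (Lₖ₊₁ - L*)^{2/α}` with `c > 0`, `α ∈ (1,2)`,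
then `Lₖ - L* = O(k^{-α/(2-α)})`; in particular `Lₖ - L* ∈ o(1/k)`. -/
theorem stmt_18 (L : ℕ → ℝ) (Lstar : ℝ) (hmono : Antitone L)
    (hbound : ∀ k, Lstar ≤ L k)
    (α c : ℝ) (hα : 1 < α ∧ α < 2) (hc : 0 < c)
    (hdec : ∃ K : ℕ, ∀ k ≥ K,
      L (k + 1) - L k ≤ -c * (L (k + 1) - Lstar) ^ (2 / α)) :
    (∃ M : ℝ, 0 < M ∧ ∀ k : ℕ, 1 ≤ k →
        L k - Lstar ≤ M * (k : ℝ) ^ (-(α / (2 - α)))) ∧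
      Tendsto (fun k : ℕ => (k : ℝ) * (L k - Lstar)) atTop (nhds 0) := by
  obtain ⟨M, hM0, hMb⟩ := aux_main L Lstar hmono hbound α c hα hc hdec
  refine ⟨⟨M, hM0, hMb⟩, ?_⟩
  set β : ℝ := α / (2 - α) with hβdef
  have hβ1 : 1 < β := by
    rw [hβdef, lt_div_iff₀ (by linarith [hα.2])]
    linarith [hα.1]
  have hg : Tendsto (fun k : ℕ => M * (k : ℝ) ^ (1 - β)) atTop (nhds 0) := by
    have h1 : Tendsto (fun x : ℝ => x ^ (-(β - 1))) atTop (nhds 0) :=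
      tendsto_rpow_neg_atTop (by linarith)
    have h2 : Tendsto (fun k : ℕ => ((k : ℝ)) ^ (-(β - 1))) atTop (nhds 0) :=
      h1.comp tendsto_natCast_atTop_atTop
    have h3 := h2.const_mul M
    simpa [show -(β - 1) = 1 - β by ring] using h3
  apply squeeze_zero' ?_ ?_ hg
  · filter_upwards with k
    exact mul_nonneg (Nat.cast_nonneg k) (by linarith [hbound k])
  · filter_upwards [eventually_ge_atTop 1] with k hk
    have hk0 : (0:ℝ) < (k:ℝ) := by exact_mod_cast hk
    have e : (k:ℝ) ^ (1 - β) = (k:ℝ) * (k:ℝ) ^ (-β) := by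
      rw [show (1:ℝ) - β = 1 + (-β) by ring, Real.rpow_add hk0, Real.rpow_one]
    have := hMb k hk
    have hkb : (0:ℝ) ≤ (k:ℝ) := hk0.le
    calc (k:ℝ) * (L k - Lstar) ≤ (k:ℝ) * (M * (k:ℝ) ^ (-β)) :=
          mul_le_mul_of_nonneg_left this hkb
      _ = M * (k:ℝ) ^ (1 - β) := by rw [e]; ring
end
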